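/- Fix γ ∈ (1,2). For n ≥ 3 set θₙ = n log n, rₙ = e^{-θₙ}, aₙ = rₙ^{-γ}, and π = Σ_{n≥3} aₙ δ_{rₙ}. Then π((1,∞)) = 0 and ∫₍₀,∞₎ r² π(dr) = Σ_{n≥3} rₙ^{2-γ} < ∞, so ψ(λ) = ∫ (e^{-λr} - 1 + λr) π(dr) defines a branching mechanism. Moreover, the lower exponent of ψ' at infinity satisfies γ_{ψ'} ≥ γ - 1; i.e., for every c < γ - 1, ψ'(λ) λ^{-c} → ∞ as λ → ∞. -/

import Mathlib

open MeasureTheory Real Set Filter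

private lemma slc_exp_rpow (x a : ℝ) : Real.exp x ^ a = Real.exp (x * a) := by
  rw [Real.rpow_def_of_pos (Real.exp_pos x), Real.log_exp]

private lemma slc_log_ge {n : ℕ} (hn : 3 ≤ n) : 1 ≤ Real.log n := by
  have h3 : (3:ℝ) ≤ (n:ℝ) := by exact_mod_cast hn
  have hpos : (0:ℝ) < n := by linarith
  rw [Real.le_log_iff_exp_le hpos]
  have := Real.exp_one_lt_d9
  linarith

private lemma slc_theta_ge {n : ℕ} (hn : 3 ≤ n) : (n:ℝ) ≤ (n:ℝ) * Real.log n := by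
  have h := slc_log_ge hn
  have hpos : (0:ℝ) ≤ (n:ℝ) := Nat.cast_nonneg n
  nlinarith

/-- Summability of exp(-b * θ(n+3)) for b > 0. -/
private lemma slc_summable {b : ℝ} (hb : 0 < b) :
    Summable (fun n : ℕ => Real.exp (-(((n+3 : ℕ) : ℝ) * Real.log ((n+3 : ℕ) : ℝ)) * b)) := by
  have hgeom : Summable (fun n : ℕ => Real.exp ((n : ℝ) * (-b))) :=
    Real.summable_exp_nat_mul_iff.mpr (by linarith)
  refine Summable.of_nonneg_of_le (fun n => (Real.exp_pos _).le) (fun n => ?_) hgeom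
  apply Real.exp_le_exp.mpr
  have h1 : ((n : ℝ)) ≤ ((n+3 : ℕ) : ℝ) * Real.log ((n+3 : ℕ) : ℝ) := by
    have := slc_theta_ge (n := n + 3) (by omega)
    have h2 : (n : ℝ) ≤ ((n+3 : ℕ) : ℝ) := by push_cast; linarith
    linarith
  nlinarith

/-- θ(n+1) ≤ θ(n) + log n + 2 for n ≥ 3. -/
private lemma slc_theta_step {n : ℕ} (hn : 3 ≤ n) :
    ((n+1 : ℕ) : ℝ) * Real.log ((n+1 : ℕ) : ℝ)
      ≤ (n : ℝ) * Real.log n + Real.log n + 2 := by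
  have h3 : (3:ℝ) ≤ (n:ℝ) := by exact_mod_cast hn
  have hnpos : (0:ℝ) < n := by linarith
  have hn1pos : (0:ℝ) < (n:ℝ) + 1 := by linarith
  have hlog : Real.log ((n:ℝ) + 1) ≤ Real.log n + 1/(n:ℝ) := by
    have hdiv : Real.log (((n:ℝ)+1)/(n:ℝ)) ≤ ((n:ℝ)+1)/(n:ℝ) - 1 :=
      Real.log_le_sub_one_of_pos (by positivity)
    rw [Real.log_div (by linarith) (ne_of_gt hnpos)] at hdiv
    have heq : ((n:ℝ)+1)/(n:ℝ) - 1 = 1/(n:ℝ) := by field_simp; ring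
    rw [heq] at hdiv
    linarith
  have hcast : ((n+1 : ℕ) : ℝ) = (n : ℝ) + 1 := by push_cast; ring
  rw [hcast]
  have hinv : 1/(n:ℝ) ≤ 1 := by
    rw [div_le_one hnpos]
    linarith
  have hlogpos : (1:ℝ) ≤ Real.log n := slc_log_ge hn
  have hmul : (n:ℝ) * (1/(n:ℝ)) = 1 := by field_simp
  have hkey : ((n:ℝ)+1) * Real.log ((n:ℝ)+1) ≤ ((n:ℝ)+1) * (Real.log n + 1/(n:ℝ)) :=
    mul_le_mul_of_nonneg_left hlog (by linarith)
  nlinarith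

theorem stable_like_construction (γ : ℝ) (hγ1 : 1 < γ) (hγ2 : γ < 2) :
    let r : ℕ → ℝ := fun n => Real.exp (-((n : ℝ) * Real.log n))
    let ν : Measure ℝ :=
      Measure.sum (fun n : ℕ =>
        (ENNReal.ofReal (r (n + 3) ^ (-γ))) • Measure.dirac (r (n + 3)))
    let ψ' : ℝ → ℝ := fun l =>
      ∑' n : ℕ, r (n + 3) ^ (-(γ - 1)) * (1 - Real.exp (-(l * r (n + 3))))
    ν (Set.Ioi 1) = 0 ∧
    Summable (fun n : ℕ => r (n + 3) ^ (2 - γ)) ∧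
    ∀ c : ℝ, c < γ - 1 →
      Tendsto (fun l : ℝ => ψ' l * l ^ (-c)) atTop atTop := by
  intro r ν ψ'
  -- θ notation
  set θ : ℕ → ℝ := fun n => (n : ℝ) * Real.log n with hθ
  have hr : ∀ n, r n = Real.exp (-θ n) := fun n => rfl
  have hrpow : ∀ (n : ℕ) (a : ℝ), r n ^ a = Real.exp (-θ n * a) := by
    intro n a; rw [hr, slc_exp_rpow]
  have hrpos : ∀ n, 0 < r n := fun n => Real.exp_pos _
  -- nonnegativity of ψ' summands for l ≥ 0
  have hterm_nonneg : ∀ (l : ℝ), 0 ≤ l → ∀ n : ℕ,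
      0 ≤ r (n + 3) ^ (-(γ - 1)) * (1 - Real.exp (-(l * r (n + 3)))) := by
    intro l hl n
    apply mul_nonneg (Real.rpow_nonneg (hrpos _).le _)
    have : Real.exp (-(l * r (n+3))) ≤ 1 := by
      apply Real.exp_le_one_iff.mpr
      have := (hrpos (n+3)).le
      nlinarith
    linarith
  -- summability of ψ' summands for l ≥ 0
  have hsum2 : Summable (fun n : ℕ => r (n + 3) ^ (2 - γ)) := by
    have : (fun n : ℕ => r (n + 3) ^ (2 - γ))
        = fun n : ℕ => Real.exp (-θ (n+3) * (2 - γ)) := by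
      funext n; exact hrpow (n+3) (2-γ)
    rw [this]
    exact slc_summable (by linarith)
  have hsummable : ∀ (l : ℝ), 0 ≤ l →
      Summable (fun n : ℕ => r (n + 3) ^ (-(γ - 1)) * (1 - Real.exp (-(l * r (n + 3))))) := by
    intro l hl
    refine Summable.of_nonneg_of_le (hterm_nonneg l hl) (fun n => ?_) (hsum2.mul_left l)
    have h1 : 1 - Real.exp (-(l * r (n+3))) ≤ l * r (n+3) := by
      have := Real.add_one_le_exp (-(l * r (n+3)))
      linarith
    have h2 : r (n + 3) ^ (-(γ - 1)) * (l * r (n+3)) = l * r (n + 3) ^ (2 - γ) := by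
      rw [hrpow, hrpow, hr, mul_left_comm, ← Real.exp_add]
      congr 1
      ring
    calc r (n + 3) ^ (-(γ - 1)) * (1 - Real.exp (-(l * r (n + 3))))
        ≤ r (n + 3) ^ (-(γ - 1)) * (l * r (n+3)) := by
          apply mul_le_mul_of_nonneg_left h1 (Real.rpow_nonneg (hrpos _).le _)
      _ = l * r (n + 3) ^ (2 - γ) := h2
  refine ⟨?_, hsum2, ?_⟩
  · -- ν (Ioi 1) = 0
    show (Measure.sum _) (Set.Ioi (1:ℝ)) = 0
    rw [Measure.sum_apply _ measurableSet_Ioi]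
    have : ∀ n : ℕ, ((ENNReal.ofReal (r (n + 3) ^ (-γ))) • Measure.dirac (r (n + 3)))
        (Set.Ioi (1:ℝ)) = 0 := by
      intro n
      rw [Measure.smul_apply, Measure.dirac_apply' _ measurableSet_Ioi]
      have hle : r (n+3) ≤ 1 := by
        rw [hr]
        apply Real.exp_le_one_iff.mpr
        have h1 : (1:ℝ) ≤ Real.log ((n+3 : ℕ) : ℝ) := slc_log_ge (by omega)
        have h2 : (0:ℝ) ≤ ((n+3 : ℕ) : ℝ) := Nat.cast_nonneg _
        simp only [hθ]
        nlinarith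
      rw [Set.indicator_of_notMem (by simpa using hle)]
      simp
    simp [this]
  · -- the lower exponent part
    suffices key : ∀ c : ℝ, 0 ≤ c → c < γ - 1 →
        Tendsto (fun l : ℝ => ψ' l * l ^ (-c)) atTop atTop by
      intro c hc
      rcases le_or_gt 0 c with h0 | h0
      · exact key c h0 hc
      · refine tendsto_atTop_mono' atTop ?_ (key 0 le_rfl (by linarith))
        filter_upwards [eventually_ge_atTop (1:ℝ)] with l hl
        have hψ : 0 ≤ ψ' l := tsum_nonneg (hterm_nonneg l (by linarith))
        apply mul_le_mul_of_nonneg_left _ hψ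
        apply Real.rpow_le_rpow_of_exponent_le hl
        linarith
    intro c hc0 hc
    -- the lower bound function g n → ∞
    set g : ℕ → ℝ := fun n => (1 - Real.exp (-1)) * Real.exp ((γ-1) * θ n - c * θ (n+1))
      with hg
    have hgtend : Tendsto g atTop atTop := by
      have hh : Tendsto (fun n : ℕ => (γ-1) * θ n - c * θ (n+1)) atTop atTop := by
        have hlow : Tendsto (fun n : ℕ => ((γ-1-c) * (n:ℝ) - 3*c) * Real.log n)
            atTop atTop := by
          apply Tendsto.atTop_mul_atTop₀
          · apply tendsto_atTop_add_const_right
            exact (tendsto_natCast_atTop_atTop (R := ℝ)).const_mul_atTop (by linarith)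
          · exact Real.tendsto_log_atTop.comp (tendsto_natCast_atTop_atTop (R := ℝ))
        apply tendsto_atTop_mono' atTop _ hlow
        filter_upwards [eventually_ge_atTop 3] with n hn
        have hstep := slc_theta_step hn
        have hlog : (1:ℝ) ≤ Real.log n := slc_log_ge hn
        have hcast : θ (n+1) = ((n+1 : ℕ) : ℝ) * Real.log ((n+1 : ℕ) : ℝ) := rfl
        simp only [hθ]
        push_cast at hstep ⊢
        have h1 : c * (((n:ℝ)+1) * Real.log ((n:ℝ)+1))
            ≤ c * ((n:ℝ) * Real.log n + Real.log n + 2) :=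
          mul_le_mul_of_nonneg_left hstep hc0
        have h2 : c * 1 ≤ c * Real.log n := mul_le_mul_of_nonneg_left hlog hc0
        linarith
      have hexp : Tendsto (fun n : ℕ => Real.exp ((γ-1) * θ n - c * θ (n+1))) atTop atTop :=
        Real.tendsto_exp_atTop.comp hh
      have hpos : 0 < 1 - Real.exp (-1) := by
        have : Real.exp (-1) < 1 := Real.exp_lt_one_iff.mpr (by norm_num)
        linarith
      exact hexp.const_mul_atTop hpos
    rw [tendsto_atTop]
    intro M
    obtain ⟨N0, hN0⟩ := eventually_atTop.mp (tendsto_atTop.mp hgtend M)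
    set N := max N0 3 with hN
    filter_upwards [eventually_ge_atTop (Real.exp (θ N))] with l hl
    have hlpos : 0 < l := lt_of_lt_of_le (Real.exp_pos _) hl
    set x := Real.log l with hx
    have hxN : θ N ≤ x := by
      rw [hx, Real.le_log_iff_exp_le hlpos]; exact hl
    -- find n with θ n ≤ x < θ (n+1), n ≥ N
    classical
    have hex : ∃ m : ℕ, x < θ (N + m + 1) := by
      obtain ⟨m, hm⟩ := exists_nat_gt x
      refine ⟨m, lt_of_lt_of_le hm ?_⟩
      have h1 : (m:ℝ) ≤ ((N + m + 1 : ℕ) : ℝ) := by push_cast; linarith [Nat.cast_nonneg (α := ℝ) N]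
      have h2 := slc_theta_ge (n := N + m + 1) (by omega)
      have h2' : ((N + m + 1 : ℕ) : ℝ) ≤ θ (N + m + 1) := h2
      linarith
    set m := Nat.find hex with hm
    set n := N + m with hn
    have hupper : x < θ (n+1) := Nat.find_spec hex
    have hlower : θ n ≤ x := by
      rcases Nat.eq_zero_or_pos m with h | h
      · rw [hn, h]; simpa using hxN
      · have := Nat.find_min hex (m := m - 1) (by omega)
        push_neg at this
        have : θ (N + (m-1) + 1) ≤ x := this
        have heq : N + (m-1) + 1 = n := by omega
        rwa [heq] at this
      -- done
    have hn3 : 3 ≤ n := le_trans (le_trans (le_max_right N0 3) (by rfl)) (by omega)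
    have hnN0 : N0 ≤ n := le_trans (le_max_left N0 3) (by omega)
    have hgM : M ≤ g n := hN0 n hnN0
    -- lower bound on ψ' l
    have hl1 : 1 ≤ l * r n := by
      rw [hr]
      have : Real.exp (θ n) ≤ l := by
        rw [← Real.exp_log hlpos]
        exact Real.exp_le_exp.mpr hlower
      calc (1:ℝ) = Real.exp (θ n) * Real.exp (-θ n) := by
            rw [← Real.exp_add]; simp
        _ ≤ l * Real.exp (-θ n) := by
            apply mul_le_mul_of_nonneg_right this (Real.exp_pos _).le
    have hterm : (1 - Real.exp (-1)) * Real.exp ((γ-1) * θ n)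
        ≤ r n ^ (-(γ - 1)) * (1 - Real.exp (-(l * r n))) := by
      have h1 : r n ^ (-(γ - 1)) = Real.exp ((γ-1) * θ n) := by
        rw [hrpow]; ring_nf
      rw [h1, mul_comm]
      apply mul_le_mul_of_nonneg_left _ (Real.exp_pos _).le
      have : Real.exp (-(l * r n)) ≤ Real.exp (-1) :=
        Real.exp_le_exp.mpr (by linarith)
      linarith
    have hψlb : (1 - Real.exp (-1)) * Real.exp ((γ-1) * θ n) ≤ ψ' l := by
      have hk : n - 3 + 3 = n := by omega
      have := Summable.le_tsum (hsummable l hlpos.le) (n - 3)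
        (fun j _ => hterm_nonneg l hlpos.le j)
      rw [hk] at this
      exact le_trans hterm this
    -- lower bound on l ^ (-c)
    have hlc : Real.exp (-c * θ (n+1)) ≤ l ^ (-c) := by
      have hlub : l ≤ Real.exp (θ (n+1)) := by
        rw [← Real.exp_log hlpos]
        exact Real.exp_le_exp.mpr hupper.le
      calc Real.exp (-c * θ (n+1)) = Real.exp (θ (n+1) * (-c)) := by ring_nf
        _ = Real.exp (θ (n+1)) ^ (-c) := (slc_exp_rpow _ _).symm
        _ ≤ l ^ (-c) := Real.rpow_le_rpow_of_nonpos hlpos hlub (by linarith)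
    -- combine
    have hA : (0:ℝ) ≤ (1 - Real.exp (-1)) * Real.exp ((γ-1) * θ n) := by
      have h1 : Real.exp (-1) < 1 := Real.exp_lt_one_iff.mpr (by norm_num)
      have h2 := Real.exp_pos ((γ-1) * θ n)
      nlinarith
    calc M ≤ g n := hgM
      _ = ((1 - Real.exp (-1)) * Real.exp ((γ-1) * θ n)) * Real.exp (-c * θ (n+1)) := by
          rw [hg, mul_assoc, ← Real.exp_add]; ring_nf
      _ ≤ ψ' l * l ^ (-c) :=
          mul_le_mul hψlb hlc (Real.exp_pos _).le (le_trans hA hψlb)
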